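/- Every sequence ε ∈ {0,1}^ℕ satisfying the condition that for all n ≥ 0 neither σ^n ε ⪰ a nor σ^n ε ⪯ ā holds (where a is the quasi-greedy expansion of 1 in base β) is simultaneously the greedy and the lazy β-expansion of the number π_β(ε) = Σ ε_n β^{-n}. -/

import Mathlib

/-- Strict lexicographic order on digit sequences. -/
def LexLt (x y : ℕ → ℕ) : Prop := ∃ n, (∀ k < n, x k = y k) ∧ x n < y n

/-- Non-strict lexicographic order on digit sequences. -/
def LexLe (x y : ℕ → ℕ) : Prop := LexLt x y ∨ x = y

/-- `a` is the quasi-greedy expansion of `1` in base `β ∈ (1,2)`: the lexicographically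
largest binary sequence summing to `1` that does not end in `0^∞`. -/
structure IsQuasiGreedyOne (β : ℝ) (a : ℕ → ℕ) : Prop where
  digits : ∀ n, a n ≤ 1
  sum_one : (∑' n : ℕ, (a n : ℝ) / β ^ (n + 1)) = 1
  not_fin : ∀ N, ∃ n ≥ N, a n ≠ 0
  maximal : ∀ b : ℕ → ℕ, (∀ n, b n ≤ 1) → (∑' n : ℕ, (b n : ℝ) / β ^ (n + 1)) = 1 →
    (∀ N, ∃ n ≥ N, b n ≠ 0) → LexLe b a

noncomputable def piB (β : ℝ) (x : ℕ → ℕ) : ℝ := ∑' n : ℕ, (x n : ℝ) / β ^ (n + 1)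
lemma summable_piB {β : ℝ} (hβ : 1 < β) (x : ℕ → ℕ) (hx : ∀ n, x n ≤ 1) :
    Summable (fun n : ℕ => (x n : ℝ) / β ^ (n + 1)) := by
  have hb0 : (0:ℝ) < β := lt_trans one_pos hβ
  have hr : (0:ℝ) ≤ 1/β := by positivity
  have hr1 : 1/β < 1 := by rw [div_lt_one hb0]; exact hβ
  have hg : Summable (fun n : ℕ => (1/β)^(n+1)) :=
    ((summable_geometric_of_lt_one hr hr1).mul_left (1/β)).congr (by
      intro n; rw [pow_succ]; ring)
  refine Summable.of_nonneg_of_le (fun n => by positivity) (fun n => ?_) hg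
  rw [div_pow, one_pow]
  have hxn : ((x n : ℝ)) ≤ 1 := by exact_mod_cast hx n
  gcongr

lemma piB_nonneg {β : ℝ} (hβ : 1 < β) (x : ℕ → ℕ) (hx : ∀ n, x n ≤ 1) : 0 ≤ piB β x :=
  tsum_nonneg (fun n => by positivity)

lemma piB_ones {β : ℝ} (hβ : 1 < β) : piB β (fun _ => 1) = 1/(β-1) := by
  have hb0 : (0:ℝ) < β := lt_trans one_pos hβ
  have hr : (0:ℝ) ≤ 1/β := by positivity
  have hr1 : 1/β < 1 := by rw [div_lt_one hb0]; exact hβ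
  have := tsum_geometric_of_lt_one hr hr1
  unfold piB
  have h2 : (fun n : ℕ => ((1:ℕ):ℝ)/β^(n+1)) = fun n : ℕ => (1/β) * (1/β)^n := by
    funext n; rw [pow_succ]; push_cast; ring
  rw [h2, tsum_mul_left, this]
  have : (1:ℝ) - 1/β = (β-1)/β := by field_simp
  rw [this]
  field_simp

lemma piB_le {β : ℝ} (hβ : 1 < β) (x : ℕ → ℕ) (hx : ∀ n, x n ≤ 1) :
    piB β x ≤ 1/(β-1) := by
  rw [← piB_ones hβ]
  refine Summable.tsum_le_tsum (fun n => ?_) (summable_piB hβ x hx) (summable_piB hβ _ (fun _ => le_refl 1))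
  have hb0 : (0:ℝ) < β := lt_trans one_pos hβ
  have hxn : ((x n : ℝ)) ≤ 1 := by exact_mod_cast hx n
  simp only [Nat.cast_one]
  gcongr

lemma piB_split {β : ℝ} (hβ : 1 < β) (x : ℕ → ℕ) (hx : ∀ n, x n ≤ 1) (N : ℕ) :
    piB β x = (∑ k ∈ Finset.range N, (x k : ℝ)/β^(k+1)) + (1/β^N) * piB β (fun k => x (k+N)) := by
  have hb0 : (0:ℝ) < β := lt_trans one_pos hβ
  have hs := summable_piB hβ x hx
  have h := Summable.sum_add_tsum_nat_add (f := fun n : ℕ => (x n : ℝ)/β^(n+1)) N hs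
  rw [show piB β x = ∑' n : ℕ, (x n : ℝ)/β^(n+1) from rfl, ← h]
  congr 1
  unfold piB
  rw [← tsum_mul_left]
  congr 1
  funext n
  rw [pow_add]
  ring

lemma piB_compl {β : ℝ} (hβ : 1 < β) (x : ℕ → ℕ) (hx : ∀ n, x n ≤ 1) :
    piB β (fun n => 1 - x n) = 1/(β-1) - piB β x := by
  have hb0 : (0:ℝ) < β := lt_trans one_pos hβ
  rw [eq_sub_iff_add_eq, ← piB_ones hβ]
  unfold piB
  rw [← Summable.tsum_add (summable_piB hβ _ (fun n => Nat.sub_le 1 (x n))) (summable_piB hβ x hx)]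
  congr 1
  funext n
  have := hx n
  have h1 : ((1 - x n : ℕ) : ℝ) + (x n : ℝ) = 1 := by
    interval_cases h : x n <;> simp
  rw [← add_div, h1]
  simp

lemma lex_trichotomy {x y : ℕ → ℕ} (h : ¬ LexLe x y) : LexLt y x := by
  classical
  have hne : x ≠ y := fun he => h (Or.inr he)
  have hex : ∃ n, x n ≠ y n := by
    by_contra hc; push_neg at hc; exact hne (funext hc)
  set n := Nat.find hex with hn_def
  have hn : x n ≠ y n := Nat.find_spec hex
  have hlt : ∀ k < n, x k = y k := fun k hk => by
    by_contra hc
    exact absurd (Nat.find_le hc) (not_le.mpr hk)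
  rcases lt_or_gt_of_ne hn with h1 | h1
  · exact absurd (Or.inl ⟨n, hlt, h1⟩) h
  · exact ⟨n, fun k hk => (hlt k hk).symm, h1⟩

lemma lexlt_compl {x y : ℕ → ℕ} (hx : ∀ n, x n ≤ 1) (hy : ∀ n, y n ≤ 1)
    (h : LexLt x y) : LexLt (fun n => 1 - y n) (fun n => 1 - x n) := by
  obtain ⟨n, h1, h2⟩ := h
  refine ⟨n, fun k hk => by simp only [h1 k hk], ?_⟩
  simp only []
  have := hx n; have := hy n; omega

lemma piB_aux {β : ℝ} (hβ1 : 1 < β) {a : ℕ → ℕ} (ha : IsQuasiGreedyOne β a) :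
    ∀ k : ℕ, ∀ x : ℕ → ℕ, (∀ n, x n ≤ 1) → (∀ m, LexLt (fun j => x (j + m)) a) →
      piB β x ≤ 1 + (1/(β-1)) * (1/β)^k := by
  have hb0 : (0:ℝ) < β := lt_trans one_pos hβ1
  have hb1' : (0:ℝ) < β - 1 := by linarith
  have hC : (0:ℝ) < 1/(β-1) := by positivity
  intro k
  induction k with
  | zero =>
    intro x hx _
    have := piB_le hβ1 x hx
    simp only [pow_zero, mul_one]
    linarith
  | succ k ih =>
    intro x hx hlex
    obtain ⟨n0, hpre, hlt⟩ := hlex 0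
    simp only [Nat.add_zero] at hpre hlt
    have hd : x n0 = 0 ∧ a n0 = 1 := by have := ha.digits n0; have := hx n0; omega
    set x1 : ℕ → ℕ := fun j => x (j + (n0+1)) with hx1_def
    have hx1 : ∀ n, x1 n ≤ 1 := fun n => hx _
    have hlex1 : ∀ m, LexLt (fun j => x1 (j + m)) a := by
      intro m
      have h := hlex (m + (n0+1))
      have : (fun j => x1 (j + m)) = fun j => x (j + (m + (n0+1))) := by
        funext j; simp only [hx1_def]; congr 1; omega
      rw [this]; exact h
    have hsplit := piB_split hβ1 x hx (n0+1)
    have hsplita := piB_split hβ1 a ha.digits (n0+1)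
    have hsa : piB β a = 1 := ha.sum_one
    set t : ℝ := 1/β^(n0+1) with ht_def
    have ht0 : 0 < t := by positivity
    have htb : t ≤ 1/β := by
      rw [ht_def]
      apply one_div_le_one_div_of_le hb0
      calc β = β^1 := (pow_one β).symm
        _ ≤ β^(n0+1) := pow_le_pow_right₀ (le_of_lt hβ1) (by omega)
    have hSx : ∑ j ∈ Finset.range (n0+1), (x j : ℝ)/β^(j+1)
        = (∑ j ∈ Finset.range n0, (a j : ℝ)/β^(j+1)) := by
      rw [Finset.sum_range_succ, hd.1]
      simp only [Nat.cast_zero, zero_div, add_zero]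
      exact Finset.sum_congr rfl (fun j hj => by
        rw [hpre j (Finset.mem_range.mp hj)])
    have hSa : ∑ j ∈ Finset.range (n0+1), (a j : ℝ)/β^(j+1)
        = (∑ j ∈ Finset.range n0, (a j : ℝ)/β^(j+1)) + t := by
      rw [Finset.sum_range_succ, hd.2]; simp [ht_def]
    have ha1 : 0 ≤ piB β (fun j => a (j + (n0+1))) :=
      piB_nonneg hβ1 _ (fun n => ha.digits _)
    have hx1le : piB β x1 ≤ 1 + (1/(β-1)) * (1/β)^k := ih x1 hx1 hlex1
    -- piB x = S + t * piB x1 ; 1 = S + t + t * piB a1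
    rw [hsplita, hSa] at hsa
    rw [hsplit, hSx]
    rcases le_or_gt (piB β x1) 1 with hc | hc
    · have : (0:ℝ) < (1/(β-1)) * (1/β)^(k+1) := by positivity
      nlinarith
    · have h1 : t * piB β x1 ≤ (1/β) * piB β x1 := by
        apply mul_le_mul_of_nonneg_right htb
        linarith
      have h2 : (1/β) * piB β x1 ≤ (1/β) * (1 + (1/(β-1)) * (1/β)^k) := by
        apply mul_le_mul_of_nonneg_left hx1le (by positivity)
      have h3 : t * piB β (fun j => a (j + (n0+1))) ≥ 0 := by positivity
      have hβinv : (1/β) ≤ 1 := by rw [div_le_one hb0]; linarith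
      have : (1/β) * (1 + (1/(β-1)) * (1/β)^k) = 1/β + (1/(β-1)) * (1/β)^(k+1) := by
        rw [pow_succ]; ring
      nlinarith

lemma piB_le_one {β : ℝ} (hβ1 : 1 < β) {a : ℕ → ℕ} (ha : IsQuasiGreedyOne β a)
    (x : ℕ → ℕ) (hx : ∀ n, x n ≤ 1) (hlex : ∀ m, LexLt (fun j => x (j + m)) a) :
    piB β x ≤ 1 := by
  have hb0 : (0:ℝ) < β := lt_trans one_pos hβ1
  have hb1' : (0:ℝ) < β - 1 := by linarith
  have hC : (0:ℝ) < 1/(β-1) := by positivity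
  by_contra h
  push_neg at h
  set δ : ℝ := piB β x - 1 with hδ
  have hδ0 : 0 < δ := by linarith
  have hr : (0:ℝ) ≤ 1/β := by positivity
  have hr1 : 1/β < 1 := by rw [div_lt_one hb0]; exact hβ1
  obtain ⟨k, hk⟩ := exists_pow_lt_of_lt_one (show 0 < δ / (1/(β-1)) by positivity) hr1
  have := piB_aux hβ1 ha k x hx hlex
  rw [lt_div_iff₀ hC] at hk
  nlinarith

lemma piB_lt_one {β : ℝ} (hβ1 : 1 < β) {a : ℕ → ℕ} (ha : IsQuasiGreedyOne β a)
    (x : ℕ → ℕ) (hx : ∀ n, x n ≤ 1) (hlex : ∀ m, LexLt (fun j => x (j + m)) a) :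
    piB β x < 1 := by
  have hb0 : (0:ℝ) < β := lt_trans one_pos hβ1
  obtain ⟨n0, hpre, hlt⟩ := hlex 0
  simp only [Nat.add_zero] at hpre hlt
  have hd : x n0 = 0 ∧ a n0 = 1 := by have := ha.digits n0; have := hx n0; omega
  set x1 : ℕ → ℕ := fun j => x (j + (n0+1)) with hx1_def
  have hx1 : ∀ n, x1 n ≤ 1 := fun n => hx _
  have hlex1 : ∀ m, LexLt (fun j => x1 (j + m)) a := by
    intro m
    have h := hlex (m + (n0+1))
    have : (fun j => x1 (j + m)) = fun j => x (j + (m + (n0+1))) := by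
      funext j; simp only [hx1_def]; congr 1; omega
    rw [this]; exact h
  have hsplit := piB_split hβ1 x hx (n0+1)
  have hsplita := piB_split hβ1 a ha.digits (n0+1)
  have hsa : piB β a = 1 := ha.sum_one
  set t : ℝ := 1/β^(n0+1) with ht_def
  have ht0 : 0 < t := by positivity
  have hSx : ∑ j ∈ Finset.range (n0+1), (x j : ℝ)/β^(j+1)
      = (∑ j ∈ Finset.range n0, (a j : ℝ)/β^(j+1)) := by
    rw [Finset.sum_range_succ, hd.1]
    simp only [Nat.cast_zero, zero_div, add_zero]
    exact Finset.sum_congr rfl (fun j hj => by rw [hpre j (Finset.mem_range.mp hj)])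
  have hSa : ∑ j ∈ Finset.range (n0+1), (a j : ℝ)/β^(j+1)
      = (∑ j ∈ Finset.range n0, (a j : ℝ)/β^(j+1)) + t := by
    rw [Finset.sum_range_succ, hd.2]; simp [ht_def]
  -- piB a1 > 0
  obtain ⟨n, hnge, hnne⟩ := ha.not_fin (n0+1)
  set j0 : ℕ := n - (n0+1) with hj0
  have haj : a (j0 + (n0+1)) ≠ 0 := by
    have : j0 + (n0+1) = n := by omega
    rw [this]; exact hnne
  have ha1pos : 0 < piB β (fun j => a (j + (n0+1))) := by
    have hs := summable_piB hβ1 (fun j => a (j + (n0+1))) (fun n => ha.digits _)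
    have hterm : (0:ℝ) < (a (j0 + (n0+1)) : ℝ)/β^(j0+1) := by
      have : 1 ≤ a (j0 + (n0+1)) := Nat.one_le_iff_ne_zero.mpr haj
      have : (1:ℝ) ≤ (a (j0 + (n0+1)) : ℝ) := by exact_mod_cast this
      positivity
    calc (0:ℝ) < (a (j0 + (n0+1)) : ℝ)/β^(j0+1) := hterm
      _ ≤ piB β (fun j => a (j + (n0+1))) :=
        Summable.le_tsum hs j0 (fun i _ => by positivity)
  have hx1le : piB β x1 ≤ 1 := piB_le_one hβ1 ha x1 hx1 hlex1
  rw [hsplita, hSa] at hsa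
  rw [hsplit, hSx]
  nlinarith

/-- every binary sequence `ε` such that for all `n` neither `σⁿ ε ⪰ a` nor
`σⁿ ε ⪯ ā` holds is simultaneously the greedy (lexicographically maximal) and the lazy
(lexicographically minimal) `β`-expansion of `π_β(ε) = Σ ε_n β^{-n}`. -/
theorem strictly_between_implies_greedy_and_lazy
    (β : ℝ) (hβ : β ∈ Set.Ioo (1 : ℝ) 2) (a : ℕ → ℕ) (ha : IsQuasiGreedyOne β a)
    (ε : ℕ → ℕ) (hε : ∀ n, ε n ≤ 1)
    (hbetween : ∀ n : ℕ, ¬ LexLe a (fun k => ε (k + n)) ∧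
      ¬ LexLe (fun k => ε (k + n)) (fun k => 1 - a k)) :
    ∀ ε' : ℕ → ℕ, (∀ n, ε' n ≤ 1) →
      (∑' n : ℕ, (ε' n : ℝ) / β ^ (n + 1)) = (∑' n : ℕ, (ε n : ℝ) / β ^ (n + 1)) →
      LexLe ε' ε ∧ LexLe ε ε' := by
  intro ε' hε' hsum
  obtain ⟨hβ1, hβ2⟩ := hβ
  have hb0 : (0:ℝ) < β := lt_trans one_pos hβ1
  have hb1' : (0:ℝ) < β - 1 := by linarith
  suffices h : ε' = ε by rw [h]; exact ⟨Or.inr rfl, Or.inr rfl⟩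
  by_contra hne
  classical
  have hex : ∃ n, ε' n ≠ ε n := by
    by_contra hc; push_neg at hc; exact hne (funext hc)
  set m := Nat.find hex with hm_def
  have hm : ε' m ≠ ε m := Nat.find_spec hex
  have hpre : ∀ k < m, ε' k = ε k := fun k hk => by
    by_contra hc; exact absurd (Nat.find_le hc) (not_le.mpr hk)
  have hlexA : ∀ n, LexLt (fun k => ε (k + n)) a := fun n => lex_trichotomy (hbetween n).1
  have hlexB : ∀ n, LexLt (fun k => 1 - a k) (fun k => ε (k + n)) :=
    fun n => lex_trichotomy (hbetween n).2
  have hsum' : piB β ε' = piB β ε := hsum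
  have hsplit' := piB_split hβ1 ε' hε' (m+1)
  have hsplit := piB_split hβ1 ε hε (m+1)
  have hS : ∑ j ∈ Finset.range (m+1), (ε' j:ℝ)/β^(j+1)
      = (∑ j ∈ Finset.range m, (ε j:ℝ)/β^(j+1)) + (ε' m:ℝ)/β^(m+1) := by
    rw [Finset.sum_range_succ]
    congr 1
    exact Finset.sum_congr rfl (fun j hj => by rw [hpre j (Finset.mem_range.mp hj)])
  have hS2 : ∑ j ∈ Finset.range (m+1), (ε j:ℝ)/β^(j+1)
      = (∑ j ∈ Finset.range m, (ε j:ℝ)/β^(j+1)) + (ε m:ℝ)/β^(m+1) :=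
    Finset.sum_range_succ _ _
  set t : ℝ := 1/β^(m+1) with ht_def
  have ht0 : 0 < t := by positivity
  set u : ℕ → ℕ := fun j => ε' (j + (m+1)) with hu_def
  set v : ℕ → ℕ := fun j => ε (j + (m+1)) with hv_def
  rw [hsplit', hS] at hsum'
  rw [hsplit, hS2] at hsum'
  have hkey : t * ((ε' m:ℝ) + piB β u) = t * ((ε m:ℝ) + piB β v) := by
    have e1 : t * ((ε' m:ℝ) + piB β u) = (ε' m:ℝ)/β^(m+1) + t * piB β u := by
      simp only [ht_def]; ring
    have e2 : t * ((ε m:ℝ) + piB β v) = (ε m:ℝ)/β^(m+1) + t * piB β v := by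
      simp only [ht_def]; ring
    rw [e1, e2]; linarith [hsum']
  have key := mul_left_cancel₀ (ne_of_gt ht0) hkey
  have hcases : ε' m = 0 ∧ ε m = 1 ∨ ε' m = 1 ∧ ε m = 0 := by
    have := hε m; have := hε' m; omega
  rcases hcases with ⟨h1, h2⟩ | ⟨h1, h2⟩
  · -- ε' m = 0, ε m = 1 : piB u = 1 + piB v
    rw [h1, h2] at key
    push_cast at key
    set z : ℕ → ℕ := fun k => 1 - v k with hz_def
    have hzd : ∀ n, z n ≤ 1 := fun n => by simp only [hz_def]; omega
    have hlexz : ∀ j, LexLt (fun k => z (k + j)) a := by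
      intro j
      have h := lexlt_compl (fun n => by omega) (fun n => hε _) (hlexB (m+1+j))
      have e1 : (fun n => 1 - (1 - a n)) = a := by
        funext n; have := ha.digits n; omega
      have e2 : (fun n => 1 - ε (n + (m+1+j))) = fun k => z (k + j) := by
        funext n; simp only [hz_def, hv_def]; congr 2; omega
      rw [e1, e2] at h
      exact h
    have hzlt : piB β z < 1 := piB_lt_one hβ1 ha z hzd hlexz
    have hcompl : piB β z = 1/(β-1) - piB β v := piB_compl hβ1 v (fun n => hε _)
    have hule : piB β u ≤ 1/(β-1) := piB_le hβ1 u (fun n => hε' _)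
    linarith
  · -- ε' m = 1, ε m = 0 : 1 + piB u = piB v
    rw [h1, h2] at key
    push_cast at key
    have hlexv : ∀ j, LexLt (fun k => v (k + j)) a := by
      intro j
      have h := hlexA (m+1+j)
      have e : (fun k => ε (k + (m+1+j))) = fun k => v (k + j) := by
        funext n; simp only [hv_def]; congr 1; omega
      rw [e] at h; exact h
    have hvlt : piB β v < 1 := piB_lt_one hβ1 ha v (fun n => hε _) hlexv
    have hu0 : 0 ≤ piB β u := piB_nonneg hβ1 u (fun n => hε' _)
    linarith
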